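/- Let k be a field and A an associative k-algebra. For a linear functional f : A → k, let Δf : A ⊗ A → k be the functional a ⊗ b ↦ f(ab). Then Δf lies in the image of the canonical map A* ⊗ A* → (A ⊗ A)* if and only if the span in A* of the right translations {a ↦ f(ab) : b ∈ A} is finite-dimensional. -/
import Mathlib


open TensorProduct

/-- For a functional `f` on an associative `k`-algebra `A`, the functional
`Δf : a ⊗ b ↦ f (a * b)` lies in the image of the canonical map `A* ⊗ A* → (A ⊗ A)*`
iff the span of the right translations `a ↦ f (a * b)` is finite-dimensional. -/
theorem statement14 (k A : Type) [Field k] [Ring A] [Algebra k A]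
    (f : Module.Dual k A) :
    (LinearMap.mul' k A).dualMap f ∈ LinearMap.range (TensorProduct.dualDistrib k A A) ↔
      FiniteDimensional k
        ↥(Submodule.span k {g : Module.Dual k A | ∃ b : A, ∀ a : A, g a = f (a * b)}) := by
  classical
  constructor
  · rintro ⟨x, hx⟩
    obtain ⟨S, rfl⟩ := TensorProduct.exists_finset x
    haveI : FiniteDimensional k ↥(Submodule.span k ((S.image Prod.fst : Finset (Module.Dual k A)) : Set (Module.Dual k A))) :=
      FiniteDimensional.span_of_finite k (Finset.finite_toSet _)
    refine Submodule.finiteDimensional_of_le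
      (S₂ := Submodule.span k ((S.image Prod.fst : Finset (Module.Dual k A)) : Set (Module.Dual k A)))
      (Submodule.span_le.2 ?_)
    rintro g ⟨b, hb⟩
    have hg : g = ∑ p ∈ S, p.2 b • p.1 := by
      ext a
      have h := congrArg (fun φ : Module.Dual k (A ⊗[k] A) => φ (a ⊗ₜ b)) hx
      simp only [map_sum, LinearMap.sum_apply, TensorProduct.dualDistrib_apply,
        LinearMap.dualMap_apply, LinearMap.mul'_apply] at h
      simp [hb a, ← h, mul_comm]
    rw [hg]
    exact Submodule.sum_mem _ fun p hp =>
      Submodule.smul_mem _ _ (Submodule.subset_span (Finset.mem_coe.2 (Finset.mem_image_of_mem Prod.fst hp)))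
  · intro hfd
    set T : A →ₗ[k] Module.Dual k A :=
      (LinearMap.llcomp k A A k f).comp (LinearMap.mul k A).flip with hTdef
    have hT : ∀ b a, T b a = f (a * b) := by
      intro b a
      simp [hTdef, LinearMap.mul_apply']
    set N := Submodule.span k {g : Module.Dual k A | ∃ b : A, ∀ a : A, g a = f (a * b)} with hN
    have hmem : ∀ b, T b ∈ N := fun b => Submodule.subset_span ⟨b, fun a => hT b a⟩
    let T' : A →ₗ[k] N := T.codRestrict N hmem
    haveI : Module.Free k ↥N := Module.Free.of_divisionRing k ↥N
    let B := Module.finBasis k ↥N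
    refine ⟨∑ i, ((B i : Module.Dual k A)) ⊗ₜ ((B.coord i).comp T'), ?_⟩
    apply TensorProduct.ext'
    intro a b
    have hrepr : (T' b : Module.Dual k A) = ∑ i, B.repr (T' b) i • (B i : Module.Dual k A) := by
      conv_lhs => rw [← B.sum_repr (T' b)]
      push_cast
      rfl
    have hval : (T' b : Module.Dual k A) a = f (a * b) := hT b a
    simp only [map_sum, LinearMap.sum_apply, TensorProduct.dualDistrib_apply,
      LinearMap.dualMap_apply, LinearMap.mul'_apply, LinearMap.comp_apply, Module.Basis.coord_apply]
    rw [← hval, hrepr]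
    simp only [LinearMap.sum_apply, LinearMap.smul_apply, smul_eq_mul]
    exact Finset.sum_congr rfl fun i _ => mul_comm _ _
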